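/- Let λ > 0, d ≥ 1, and q, q' ∈ ℝ^d. Let μ_q denote the measure on ℝ^d with density x ↦ ∏_{i=1}^d (1/(2λ))·exp(−|x_i − q_i|/λ) with respect to Lebesgue measure, and define μ_{q'} analogously. Then for every measurable set S ⊆ ℝ^d, μ_q(S) ≤ exp(‖q − q'‖₁/λ) · μ_{q'}(S), where ‖q − q'‖₁ = Σ_{i=1}^d |q_i − q'_i|. -/

import Mathlib

open MeasureTheory

/-- The `d`-dimensional i.i.d. Laplace measure with center `q` and scale `lam`. -/
noncomputable def laplaceMeasure (d : ℕ) (lam : ℝ) (q : Fin d → ℝ) :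
    Measure (Fin d → ℝ) :=
  volume.withDensity fun x =>
    ENNReal.ofReal (∏ i : Fin d, (1 / (2 * lam)) * Real.exp (-|x i - q i| / lam))

/-- The i.i.d. Laplace measures at two centers differ by at most a factor
`exp (‖q - q'‖₁ / lam)` on every measurable set. -/
theorem laplace_measure_ratio_bound
    (d : ℕ) (hd : 1 ≤ d) (lam : ℝ) (hlam : 0 < lam) (q q' : Fin d → ℝ)
    (S : Set (Fin d → ℝ)) (hS : MeasurableSet S) :
    laplaceMeasure d lam q S
      ≤ ENNReal.ofReal (Real.exp ((∑ i : Fin d, |q i - q' i|) / lam)) *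
        laplaceMeasure d lam q' S := by
  have key : ∀ x : Fin d → ℝ,
      (∏ i : Fin d, (1 / (2 * lam)) * Real.exp (-|x i - q i| / lam))
        ≤ Real.exp ((∑ i : Fin d, |q i - q' i|) / lam) *
          ∏ i : Fin d, (1 / (2 * lam)) * Real.exp (-|x i - q' i| / lam) := by
    intro x
    have h1 : ∀ i : Fin d, (1 / (2 * lam)) * Real.exp (-|x i - q i| / lam)
        ≤ Real.exp (|q i - q' i| / lam) *
          ((1 / (2 * lam)) * Real.exp (-|x i - q' i| / lam)) := by
      intro i
      have habs : |x i - q' i| - |q i - q' i| ≤ |x i - q i| := by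
        have := abs_sub_abs_le_abs_sub (x i - q' i) (q i - q' i)
        have h2 : x i - q' i - (q i - q' i) = x i - q i := by ring
        rw [h2] at this
        linarith
      have hdiv : -|x i - q i| / lam ≤ |q i - q' i| / lam + -|x i - q' i| / lam := by
        rw [← add_div, div_le_div_iff_of_pos_right hlam]
        linarith
      calc (1 / (2 * lam)) * Real.exp (-|x i - q i| / lam)
          ≤ (1 / (2 * lam)) * Real.exp (|q i - q' i| / lam + -|x i - q' i| / lam) := by
            apply mul_le_mul_of_nonneg_left (Real.exp_le_exp.mpr hdiv)
            positivity
        _ = Real.exp (|q i - q' i| / lam) *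
              ((1 / (2 * lam)) * Real.exp (-|x i - q' i| / lam)) := by
            rw [Real.exp_add]; ring
    calc (∏ i : Fin d, (1 / (2 * lam)) * Real.exp (-|x i - q i| / lam))
        ≤ ∏ i : Fin d, Real.exp (|q i - q' i| / lam) *
            ((1 / (2 * lam)) * Real.exp (-|x i - q' i| / lam)) := by
          apply Finset.prod_le_prod
          · intro i _; positivity
          · intro i _; exact h1 i
      _ = Real.exp ((∑ i : Fin d, |q i - q' i|) / lam) *
          ∏ i : Fin d, (1 / (2 * lam)) * Real.exp (-|x i - q' i| / lam) := by
          rw [Finset.prod_mul_distrib, ← Real.exp_sum, Finset.sum_div]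
  have hg : Measurable fun x : Fin d → ℝ =>
      ENNReal.ofReal (∏ i : Fin d, (1 / (2 * lam)) * Real.exp (-|x i - q' i| / lam)) := by
    apply Measurable.ennreal_ofReal
    apply Continuous.measurable
    continuity
  simp only [laplaceMeasure, withDensity_apply _ hS]
  rw [← lintegral_const_mul _ hg]
  apply lintegral_mono
  intro x
  dsimp only
  rw [← ENNReal.ofReal_mul (Real.exp_nonneg _)]
  exact ENNReal.ofReal_le_ofReal (key x)
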